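/- Let x, y : ℤ → ℝ be real sequences supported on {0, 1, …, L−1} that form a Golay complementary pair of length L, i.e., C_x[k] + C_y[k] = 2L·δ[k] for every integer k, where C_x[k] = Σ_{ℓ∈ℤ} x[ℓ]·x[ℓ−k]. Define the reversed sequences x̃[ℓ] = x[L−1−ℓ] and ỹ[ℓ] = y[L−1−ℓ], and for each ℓ ∈ ℤ the 2×2 real matrix S[ℓ] with first row (x[ℓ], −ỹ[ℓ]) and second row (y[ℓ], x̃[ℓ]). Then S is paraunitary: for every integer k, Σ_{ℓ∈ℤ} S[ℓ]·S[ℓ−k]ᵀ = 2L·δ[k]·I₂, where I₂ is the 2×2 identity matrix and δ[k] is the Kronecker delta. -/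

import Mathlib

open Matrix

/-- **Paraunitary matrix from a Golay pair (eq. (49)–(50)).** If real sequences
`x, y` supported on `{0,…,L−1}` form a Golay complementary pair of length `L`,
then the 2×2 matrix sequence `S[ℓ] = [[x[ℓ], −ỹ[ℓ]], [y[ℓ], x̃[ℓ]]]`, with
`x̃[ℓ] = x[L−1−ℓ]`, `ỹ[ℓ] = y[L−1−ℓ]`, is paraunitary:
`∑_ℓ S[ℓ] S[ℓ−k]ᵀ = 2L δ[k] I₂`. -/
theorem golay_pair_paraunitary (L : ℕ) (hL : 1 ≤ L) (x y : ℤ → ℝ)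
    (hx : ∀ ℓ : ℤ, (ℓ < 0 ∨ (L : ℤ) ≤ ℓ) → x ℓ = 0)
    (hy : ∀ ℓ : ℤ, (ℓ < 0 ∨ (L : ℤ) ≤ ℓ) → y ℓ = 0)
    (hGolay : ∀ k : ℤ,
      (∑' ℓ : ℤ, x ℓ * x (ℓ - k)) + (∑' ℓ : ℤ, y ℓ * y (ℓ - k)) =
        if k = 0 then (2 * L : ℝ) else 0)
    (S : ℤ → Matrix (Fin 2) (Fin 2) ℝ)
    (hS : ∀ ℓ : ℤ, S ℓ = !![x ℓ, -(y ((L : ℤ) - 1 - ℓ)); y ℓ, x ((L : ℤ) - 1 - ℓ)]) :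
    ∀ k : ℤ, (∑' ℓ : ℤ, S ℓ * (S (ℓ - k))ᵀ) =
      if k = 0 then (2 * L : ℝ) • (1 : Matrix (Fin 2) (Fin 2) ℝ) else 0 := by
  classical
  intro k
  set F : Finset ℤ := Finset.Icc (0 : ℤ) ((L : ℤ) - 1) with hFdef
  have hx0 : ∀ ℓ : ℤ, ℓ ∉ F → x ℓ = 0 := by
    intro ℓ hℓ
    apply hx
    simp only [hFdef, Finset.mem_Icc, not_and_or, not_le] at hℓ
    omega
  have hy0 : ∀ ℓ : ℤ, ℓ ∉ F → y ℓ = 0 := by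
    intro ℓ hℓ
    apply hy
    simp only [hFdef, Finset.mem_Icc, not_and_or, not_le] at hℓ
    omega
  have hmem : ∀ ℓ : ℤ, ℓ ∉ F → ((L : ℤ) - 1 - ℓ) ∉ F := by
    intro ℓ hℓ
    simp only [hFdef, Finset.mem_Icc, not_and_or, not_le] at hℓ ⊢
    omega
  have sOK : ∀ f : ℤ → ℝ, (∀ ℓ ∉ F, f ℓ = 0) → Summable f := by
    intro f hf
    exact summable_of_ne_finset_zero (s := F) (fun b hb => hf b hb)
  have key : ∀ f g : ℤ → ℝ,
      (∑' ℓ : ℤ, f ((L : ℤ) - 1 - ℓ) * g ((L : ℤ) - 1 - (ℓ - k))) =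
        ∑' ℓ : ℤ, g ℓ * f (ℓ - k) := by
    intro f g
    have h1 : (∑' ℓ : ℤ, f ((L : ℤ) - 1 - ℓ) * g ((L : ℤ) - 1 - (ℓ - k))) =
        ∑' m : ℤ, f m * g (m + k) := by
      rw [← (Equiv.subLeft ((L : ℤ) - 1)).tsum_eq (fun m => f m * g (m + k))]
      apply tsum_congr
      intro ℓ
      simp only [Equiv.subLeft_apply]
      ring_nf
    have h2 : (∑' m : ℤ, f m * g (m + k)) = ∑' n : ℤ, f (n - k) * g n := by
      rw [← (Equiv.addRight k).tsum_eq (fun n => f (n - k) * g n)]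
      apply tsum_congr
      intro m
      simp
    rw [h1, h2]
    apply tsum_congr
    intro n
    ring
  have hS0 : ∀ ℓ : ℤ, ℓ ∉ F → S ℓ * (S (ℓ - k))ᵀ = 0 := by
    intro ℓ hℓ
    have hz : S ℓ = 0 := by
      rw [hS ℓ, hx0 ℓ hℓ, hy0 ℓ hℓ, hx0 _ (hmem ℓ hℓ), hy0 _ (hmem ℓ hℓ)]
      ext i j
      fin_cases i <;> fin_cases j <;> simp
    rw [hz, Matrix.zero_mul]
  have htsum : (∑' ℓ : ℤ, S ℓ * (S (ℓ - k))ᵀ) = ∑ ℓ ∈ F, S ℓ * (S (ℓ - k))ᵀ :=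
    tsum_eq_sum hS0
  rw [htsum]
  ext i j
  rw [Matrix.sum_apply]
  fin_cases i <;> fin_cases j <;>
    simp only [hS, Matrix.mul_apply, Fin.sum_univ_two, Matrix.transpose_apply] <;>
    simp [Matrix.vecHead, Matrix.vecTail]
  · -- entry (0,0)
    have hvan : ∀ ℓ ∉ F, x ℓ * x (ℓ - k) +
        y ((L:ℤ) - 1 - ℓ) * y ((L:ℤ) - 1 - (ℓ - k)) = 0 := by
      intro ℓ hℓ
      rw [hx0 ℓ hℓ, hy0 _ (hmem ℓ hℓ)]
      ring
    rw [← tsum_eq_sum (L := SummationFilter.unconditional ℤ) hvan]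
    have hsum : (∑' ℓ : ℤ, (x ℓ * x (ℓ - k) +
        y ((L:ℤ) - 1 - ℓ) * y ((L:ℤ) - 1 - (ℓ - k)))) =
        (∑' ℓ : ℤ, x ℓ * x (ℓ - k)) +
        ∑' ℓ : ℤ, y ((L:ℤ) - 1 - ℓ) * y ((L:ℤ) - 1 - (ℓ - k)) :=
      Summable.tsum_add
        (sOK _ (fun ℓ hℓ => by rw [hx0 ℓ hℓ]; ring))
        (sOK _ (fun ℓ hℓ => by rw [hy0 _ (hmem ℓ hℓ)]; ring))
    rw [hsum, key y y, hGolay k]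
    by_cases hk : k = 0 <;> simp [hk]
  · -- entry (0,1)
    have hvan : ∀ ℓ ∉ F, x ℓ * y (ℓ - k) +
        -(y ((L:ℤ) - 1 - ℓ) * x ((L:ℤ) - 1 - (ℓ - k))) = 0 := by
      intro ℓ hℓ
      rw [hx0 ℓ hℓ, hy0 _ (hmem ℓ hℓ)]
      ring
    rw [← tsum_eq_sum (L := SummationFilter.unconditional ℤ) hvan]
    have hsum : (∑' ℓ : ℤ, (x ℓ * y (ℓ - k) +
        -(y ((L:ℤ) - 1 - ℓ) * x ((L:ℤ) - 1 - (ℓ - k))))) =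
        (∑' ℓ : ℤ, x ℓ * y (ℓ - k)) -
        ∑' ℓ : ℤ, y ((L:ℤ) - 1 - ℓ) * x ((L:ℤ) - 1 - (ℓ - k)) := by
      rw [show (fun ℓ : ℤ => x ℓ * y (ℓ - k) +
          -(y ((L:ℤ) - 1 - ℓ) * x ((L:ℤ) - 1 - (ℓ - k)))) = fun ℓ : ℤ =>
          x ℓ * y (ℓ - k) - y ((L:ℤ) - 1 - ℓ) * x ((L:ℤ) - 1 - (ℓ - k)) from by
        funext ℓ; ring]
      exact Summable.tsum_sub
        (sOK _ (fun ℓ hℓ => by rw [hx0 ℓ hℓ]; ring))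
        (sOK _ (fun ℓ hℓ => by rw [hy0 _ (hmem ℓ hℓ)]; ring))
    rw [hsum, key y x, sub_self]
    by_cases hk : k = 0 <;> simp [hk]
  · -- entry (1,0)
    have hvan : ∀ ℓ ∉ F, y ℓ * x (ℓ - k) +
        -(x ((L:ℤ) - 1 - ℓ) * y ((L:ℤ) - 1 - (ℓ - k))) = 0 := by
      intro ℓ hℓ
      rw [hy0 ℓ hℓ, hx0 _ (hmem ℓ hℓ)]
      ring
    rw [← tsum_eq_sum (L := SummationFilter.unconditional ℤ) hvan]
    have hsum : (∑' ℓ : ℤ, (y ℓ * x (ℓ - k) +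
        -(x ((L:ℤ) - 1 - ℓ) * y ((L:ℤ) - 1 - (ℓ - k))))) =
        (∑' ℓ : ℤ, y ℓ * x (ℓ - k)) -
        ∑' ℓ : ℤ, x ((L:ℤ) - 1 - ℓ) * y ((L:ℤ) - 1 - (ℓ - k)) := by
      rw [show (fun ℓ : ℤ => y ℓ * x (ℓ - k) +
          -(x ((L:ℤ) - 1 - ℓ) * y ((L:ℤ) - 1 - (ℓ - k)))) = fun ℓ : ℤ =>
          y ℓ * x (ℓ - k) - x ((L:ℤ) - 1 - ℓ) * y ((L:ℤ) - 1 - (ℓ - k)) from by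
        funext ℓ; ring]
      exact Summable.tsum_sub
        (sOK _ (fun ℓ hℓ => by rw [hy0 ℓ hℓ]; ring))
        (sOK _ (fun ℓ hℓ => by rw [hx0 _ (hmem ℓ hℓ)]; ring))
    rw [hsum, key x y, sub_self]
    by_cases hk : k = 0 <;> simp [hk]
  · -- entry (1,1)
    have hvan : ∀ ℓ ∉ F, y ℓ * y (ℓ - k) +
        x ((L:ℤ) - 1 - ℓ) * x ((L:ℤ) - 1 - (ℓ - k)) = 0 := by
      intro ℓ hℓ
      rw [hy0 ℓ hℓ, hx0 _ (hmem ℓ hℓ)]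
      ring
    rw [← tsum_eq_sum (L := SummationFilter.unconditional ℤ) hvan]
    have hsum : (∑' ℓ : ℤ, (y ℓ * y (ℓ - k) +
        x ((L:ℤ) - 1 - ℓ) * x ((L:ℤ) - 1 - (ℓ - k)))) =
        (∑' ℓ : ℤ, y ℓ * y (ℓ - k)) +
        ∑' ℓ : ℤ, x ((L:ℤ) - 1 - ℓ) * x ((L:ℤ) - 1 - (ℓ - k)) :=
      Summable.tsum_add
        (sOK _ (fun ℓ hℓ => by rw [hy0 ℓ hℓ]; ring))
        (sOK _ (fun ℓ hℓ => by rw [hx0 _ (hmem ℓ hℓ)]; ring))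
    rw [hsum, key x x, add_comm, hGolay k]
    by_cases hk : k = 0 <;> simp [hk]
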